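/- arXiv:0906.0291 — 7 statements merged into one kernel-verified Lean document; each statement's English description precedes it below -/
import Mathlib

section
/- Let f : [0,1] → ℝ be continuous, θ ∈ [0,1], and ε > 0. Then there exists J such that for every natural number j ≥ J, every t ∈ [j, j+1], and every continuous X : [0, θt] → ℝ satisfying |X(s) − j·f(s/j)| ≤ εj for all s ∈ [0, θj] and |X(s) − X(θj)| ≤ εj/2 for all s ∈ [θj, θt], one has |X(s) − t·f(s/t)| ≤ 2εt for all s ∈ [0, θt]. -/
set_option maxHeartbeats 1000000


/-- Deterministic tube-reduction inclusion from Proposition 11: for `j` large, a path lying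
in the `εj`-tube around the `j`-rescaled copy of `f` up to time `θj`, whose increments after
time `θj` are at most `εj/2`, lies in the `2εt`-tube around the `t`-rescaled copy of `f` up
to time `θt`, for all `t ∈ [j, j+1]`. -/
theorem tube_reduction
    (f : ℝ → ℝ) (hf : ContinuousOn f (Set.Icc (0 : ℝ) 1))
    (θ : ℝ) (hθ : θ ∈ Set.Icc (0 : ℝ) 1) (ε : ℝ) (hε : 0 < ε) :
    ∃ J : ℕ, ∀ j : ℕ, J ≤ j → ∀ t : ℝ, t ∈ Set.Icc (j : ℝ) (j + 1) →
      ∀ X : ℝ → ℝ, ContinuousOn X (Set.Icc 0 (θ * t)) →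
      (∀ s ∈ Set.Icc (0 : ℝ) (θ * j), |X s - j * f (s / j)| ≤ ε * j) →
      (∀ s ∈ Set.Icc (θ * (j : ℝ)) (θ * t), |X s - X (θ * j)| ≤ ε * j / 2) →
      ∀ s ∈ Set.Icc (0 : ℝ) (θ * t), |X s - t * f (s / t)| ≤ 2 * ε * t := by
  obtain ⟨M, hM⟩ :=
    (isCompact_Icc : IsCompact (Set.Icc (0:ℝ) 1)).exists_bound_of_continuousOn hf
  have hM0 : 0 ≤ M := le_trans (norm_nonneg _) (hM 0 (by norm_num))
  have hu := (isCompact_Icc : IsCompact (Set.Icc (0:ℝ) 1)).uniformContinuousOn_of_continuous hf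
  rw [Metric.uniformContinuousOn_iff_le] at hu
  obtain ⟨δ, hδ, hδ'⟩ := hu (ε/4) (by positivity)
  obtain ⟨J, hJ⟩ := exists_nat_ge (max (1/δ) (4*M/ε))
  refine ⟨J + 1, fun j hj t ht X hX h1 h2 s hs => ?_⟩
  have hθ0 := hθ.1
  have hθ1 := hθ.2
  have hj1 : (1:ℝ) ≤ (j:ℝ) := by exact_mod_cast Nat.one_le_iff_ne_zero.mpr (by omega)
  have hjJ : (J:ℝ) ≤ (j:ℝ) := by exact_mod_cast le_trans (Nat.le_succ J) hj
  have hjδ : 1/δ ≤ (j:ℝ) := le_trans (le_max_left _ _) (le_trans hJ hjJ)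
  have hjM : 4*M/ε ≤ (j:ℝ) := le_trans (le_max_right _ _) (le_trans hJ hjJ)
  have hjpos : (0:ℝ) < (j:ℝ) := lt_of_lt_of_le one_pos hj1
  have htj : (j:ℝ) ≤ t := ht.1
  have htpos : 0 < t := lt_of_lt_of_le hjpos htj
  have htub : t ≤ (j:ℝ) + 1 := ht.2
  have hδj : 1 ≤ δ * (j:ℝ) := by
    rw [div_le_iff₀ hδ] at hjδ
    nlinarith
  have hMj : M ≤ ε * (j:ℝ) / 4 := by
    rw [div_le_iff₀ hε] at hjM
    linarith
  have hs0 : 0 ≤ s := hs.1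
  have hst : s ≤ θ * t := hs.2
  rcases le_or_gt s (θ * j) with hcase | hcase
  · -- s ∈ [0, θj]
    have hsj : s / (j:ℝ) ∈ Set.Icc (0:ℝ) 1 := by
      constructor
      · positivity
      · rw [div_le_one hjpos]; nlinarith
    have hst1 : s / t ∈ Set.Icc (0:ℝ) 1 := by
      constructor
      · positivity
      · rw [div_le_one htpos]; nlinarith
    have hmono : s / t ≤ s / (j:ℝ) := by
      rw [div_le_div_iff₀ htpos hjpos]; nlinarith
    have hdist : dist (s/(j:ℝ)) (s/t) ≤ δ := by
      rw [Real.dist_eq, abs_of_nonneg (by linarith)]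
      rw [div_sub_div _ _ (ne_of_gt hjpos) (ne_of_gt htpos), div_le_iff₀ (by positivity)]
      nlinarith
    have hff : |f (s/(j:ℝ)) - f (s/t)| ≤ ε/4 := by
      have := hδ' _ hsj _ hst1 hdist
      rwa [Real.dist_eq] at this
    have hfb : |f (s/t)| ≤ M := hM _ hst1
    have e1 : |X s - (j:ℝ) * f (s/(j:ℝ))| ≤ ε * j := h1 s ⟨hs0, hcase⟩
    have e2 : |(j:ℝ) * f (s/(j:ℝ)) - (j:ℝ) * f (s/t)| ≤ (j:ℝ) * (ε/4) := by
      rw [← mul_sub, abs_mul, abs_of_pos hjpos]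
      exact mul_le_mul_of_nonneg_left hff hjpos.le
    have e3 : |(j:ℝ) * f (s/t) - t * f (s/t)| ≤ 1 * M := by
      rw [← sub_mul, abs_mul]
      apply mul_le_mul _ hfb (abs_nonneg _) (by norm_num)
      rw [abs_of_nonpos (by linarith)]; linarith
    calc |X s - t * f (s/t)|
        ≤ |X s - (j:ℝ) * f (s/(j:ℝ))| + |(j:ℝ) * f (s/(j:ℝ)) - t * f (s/t)| :=
          abs_sub_le _ _ _
      _ ≤ |X s - (j:ℝ) * f (s/(j:ℝ))| +
          (|(j:ℝ) * f (s/(j:ℝ)) - (j:ℝ) * f (s/t)| + |(j:ℝ) * f (s/t) - t * f (s/t)|) := by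
          gcongr; exact abs_sub_le _ _ _
      _ ≤ ε * j + ((j:ℝ) * (ε/4) + 1 * M) := by gcongr
      _ ≤ 2 * ε * t := by nlinarith
  · -- s ∈ (θj, θt]
    have hθt : θ * (j:ℝ) ≤ θ * t := by nlinarith
    have hθjmem : θ * (j:ℝ) ∈ Set.Icc (0:ℝ) (θ * (j:ℝ)) := ⟨by positivity, le_refl _⟩
    have e0 : |X s - X (θ * j)| ≤ ε * j / 2 := h2 s ⟨hcase.le, hst⟩
    have e1 : |X (θ * j) - (j:ℝ) * f θ| ≤ ε * j := by
      have := h1 (θ * j) hθjmem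
      rwa [mul_div_assoc, div_self (ne_of_gt hjpos), mul_one] at this
    have hst1 : s / t ∈ Set.Icc (0:ℝ) 1 := by
      constructor
      · positivity
      · rw [div_le_one htpos]
        have h' : θ * t ≤ 1 * t := mul_le_mul_of_nonneg_right hθ1 htpos.le
        linarith
    have hθmem : θ ∈ Set.Icc (0:ℝ) 1 := hθ
    have hle : s / t ≤ θ := by rw [div_le_iff₀ htpos]; linarith
    have hdist : dist θ (s/t) ≤ δ := by
      have hle' : s / t ≤ θ := by rw [div_le_iff₀ htpos]; linarith
      rw [Real.dist_eq, abs_of_nonneg (by linarith)]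
      have h' : (θ * t - s) / t ≤ δ := by
        rw [div_le_iff₀ htpos]
        have k1 : θ * (t - (j:ℝ)) ≤ 1 * (t - (j:ℝ)) :=
          mul_le_mul_of_nonneg_right hθ1 (sub_nonneg.2 htj)
        have k2 : δ * (j:ℝ) ≤ δ * t := mul_le_mul_of_nonneg_left htj hδ.le
        nlinarith
      calc θ - s / t = (θ * t - s) / t := by field_simp
        _ ≤ δ := h'
    have hff : |f θ - f (s/t)| ≤ ε/4 := by
      have := hδ' _ hθmem _ hst1 hdist
      rwa [Real.dist_eq] at this
    have hfb : |f (s/t)| ≤ M := hM _ hst1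
    have e2 : |(j:ℝ) * f θ - (j:ℝ) * f (s/t)| ≤ (j:ℝ) * (ε/4) := by
      rw [← mul_sub, abs_mul, abs_of_pos hjpos]
      exact mul_le_mul_of_nonneg_left hff hjpos.le
    have e3 : |(j:ℝ) * f (s/t) - t * f (s/t)| ≤ 1 * M := by
      rw [← sub_mul, abs_mul]
      apply mul_le_mul _ hfb (abs_nonneg _) (by norm_num)
      rw [abs_of_nonpos (by linarith)]; linarith
    calc |X s - t * f (s/t)|
        ≤ |X s - X (θ * j)| + |X (θ * j) - t * f (s/t)| := abs_sub_le _ _ _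
      _ ≤ |X s - X (θ * j)| +
          (|X (θ * j) - (j:ℝ) * f θ| + |(j:ℝ) * f θ - t * f (s/t)|) := by
          gcongr; exact abs_sub_le _ _ _
      _ ≤ |X s - X (θ * j)| +
          (|X (θ * j) - (j:ℝ) * f θ| +
            (|(j:ℝ) * f θ - (j:ℝ) * f (s/t)| + |(j:ℝ) * f (s/t) - t * f (s/t)|)) := by
          gcongr; exact abs_sub_le _ _ _
      _ ≤ ε * j / 2 + (ε * j + ((j:ℝ) * (ε/4) + 1 * M)) := by gcongr
      _ ≤ 2 * ε * t := by nlinarith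
end

section
/- Fix θ ∈ (0,1] and a natural number N ≥ 1. Define F_N ⊆ C([0,θ], ℝ) as the set of continuous f : [0,θ] → ℝ such that there exist a natural number n ≥ N and u, s ∈ [0,θ] with |u − s| ≤ 1/n² and |f(u) − f(s)| > 1/√n. Then the set {f ∈ C([0,θ], ℝ) : f(0) = 0} \ F_N is totally bounded in the supremum metric on C([0,θ], ℝ). -/
/-- Lemma 14: the set of continuous functions on `[0, θ]` started at `0` which do not have,
for any `n ≥ N`, an oscillation of size more than `1/√n` over some interval of length
`1/n²`, is totally bounded in the supremum metric. -/
theorem complement_of_bad_set_totallyBounded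
    (θ : ℝ) (hθ : θ ∈ Set.Ioc (0 : ℝ) 1) (N : ℕ) (hN : 1 ≤ N) :
    TotallyBounded
      ({f : C(Set.Icc (0 : ℝ) θ, ℝ) | f ⟨0, Set.mem_Icc.mpr ⟨le_refl 0, hθ.1.le⟩⟩ = 0} \
        {f : C(Set.Icc (0 : ℝ) θ, ℝ) | ∃ n : ℕ, N ≤ n ∧ ∃ u s : Set.Icc (0 : ℝ) θ,
          |(u : ℝ) - (s : ℝ)| ≤ 1 / (n : ℝ) ^ 2 ∧ 1 / Real.sqrt n < |f u - f s|}) := by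
  set X := Set.Icc (0 : ℝ) θ with hX
  set S : Set C(X, ℝ) :=
      ({f : C(X, ℝ) | f ⟨0, Set.mem_Icc.mpr ⟨le_refl 0, hθ.1.le⟩⟩ = 0} \
        {f : C(X, ℝ) | ∃ n : ℕ, N ≤ n ∧ ∃ u s : X,
          |(u : ℝ) - (s : ℝ)| ≤ 1 / (n : ℝ) ^ 2 ∧ 1 / Real.sqrt n < |f u - f s|}) with hS
  have hNpos : (0 : ℝ) < N := by exact_mod_cast hN
  have hsqrtN : (0 : ℝ) < Real.sqrt N := Real.sqrt_pos.mpr hNpos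
  -- oscillation bound
  have hosc : ∀ f ∈ S, ∀ n : ℕ, N ≤ n → ∀ u s : X,
      |(u : ℝ) - (s : ℝ)| ≤ 1 / (n : ℝ) ^ 2 → |f u - f s| ≤ 1 / Real.sqrt n := by
    intro f hf n hn u s hus
    by_contra h
    exact hf.2 ⟨n, hn, u, s, hus, not_le.mp h⟩
  -- uniform bound by chaining
  set M : ℝ := (N : ℝ) ^ 2 * (1 / Real.sqrt N) with hM
  have hδ : (0 : ℝ) < 1 / (N : ℝ) ^ 2 := by positivity
  have hbd : ∀ f ∈ S, ∀ t : X, |f t| ≤ M := by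
    intro f hf
    have key : ∀ k : ℕ, ∀ t : X, (t : ℝ) ≤ k * (1 / (N : ℝ) ^ 2) →
        |f t| ≤ k * (1 / Real.sqrt N) := by
      intro k
      induction k with
      | zero =>
          intro t ht
          have h0 : (t : ℝ) = 0 := le_antisymm (by simpa using ht) t.2.1
          have : t = ⟨0, Set.mem_Icc.mpr ⟨le_refl 0, hθ.1.le⟩⟩ := Subtype.ext h0
          rw [this, hf.1]
          simp
      | succ k ih =>
          intro t ht
          set t' : ℝ := max 0 ((t : ℝ) - 1 / (N : ℝ) ^ 2) with ht'
          have ht'mem : t' ∈ X := by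
            refine Set.mem_Icc.mpr ⟨le_max_left _ _, ?_⟩
            exact max_le hθ.1.le (le_trans (by linarith [hδ]) t.2.2)
          have ht'le : t' ≤ (k : ℝ) * (1 / (N : ℝ) ^ 2) := by
            rcases le_or_gt ((t : ℝ) - 1 / (N : ℝ) ^ 2) 0 with h | h
            · rw [ht', max_eq_left h]; positivity
            · rw [ht', max_eq_right h.le]
              push_cast at ht ⊢
              linarith
          have hdist : |(t : ℝ) - t'| ≤ 1 / (N : ℝ) ^ 2 := by
            rw [abs_le]
            constructor
            · have : t' ≤ (t : ℝ) := max_le t.2.1 (by linarith [hδ])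
              linarith
            · have : (t : ℝ) - 1 / (N : ℝ) ^ 2 ≤ t' := le_max_right _ _
              linarith
          have h1 : |f t - f ⟨t', ht'mem⟩| ≤ 1 / Real.sqrt N :=
            hosc f hf N le_rfl t ⟨t', ht'mem⟩ hdist
          have h2 : |f ⟨t', ht'mem⟩| ≤ (k : ℝ) * (1 / Real.sqrt N) := ih ⟨t', ht'mem⟩ ht'le
          calc |f t| ≤ |f t - f ⟨t', ht'mem⟩| + |f ⟨t', ht'mem⟩| := by
                have := abs_sub_abs_le_abs_sub (f t) (f ⟨t', ht'mem⟩)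
                have := abs_add_le (f t - f ⟨t', ht'mem⟩) (f ⟨t', ht'mem⟩)
                simpa using this
            _ ≤ 1 / Real.sqrt N + (k : ℝ) * (1 / Real.sqrt N) := add_le_add h1 h2
            _ = ((k : ℕ) + 1 : ℕ) * (1 / Real.sqrt N) := by push_cast; ring
    intro t
    have h1 : (t : ℝ) ≤ (N ^ 2 : ℕ) * (1 / (N : ℝ) ^ 2) := by
      push_cast
      rw [mul_one_div, div_self (by positivity)]
      exact le_trans t.2.2 hθ.2
    have := key (N ^ 2) t h1
    rw [hM]
    push_cast at this ⊢
    linarith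
  -- equicontinuity
  have hequi : Equicontinuous ((↑) : S → X → ℝ) := by
    intro x
    rw [Metric.equicontinuousAt_iff]
    intro ε hε
    obtain ⟨m, hm⟩ := exists_nat_gt ((1 / ε) ^ 2)
    set n : ℕ := max N m with hn
    have hnN : N ≤ n := le_max_left _ _
    have hsq : 1 / ε < Real.sqrt n := by
      rw [show (1 / ε : ℝ) = Real.sqrt ((1 / ε) ^ 2) from
        (Real.sqrt_sq (by positivity)).symm]
      exact Real.sqrt_lt_sqrt (by positivity) (lt_of_lt_of_le hm (by exact_mod_cast le_max_right N m))
    have hsn : (0 : ℝ) < Real.sqrt n := lt_trans (by positivity) hsq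
    have hεn : 1 / Real.sqrt n < ε := by
      rw [div_lt_iff₀ hsn]
      rw [div_lt_iff₀ hε] at hsq
      linarith
    refine ⟨1 / (n : ℝ) ^ 2, by positivity, fun y hy f => ?_⟩
    have hdist : |(x : ℝ) - (y : ℝ)| ≤ 1 / (n : ℝ) ^ 2 := by
      have h' : dist y x < 1 / (n : ℝ) ^ 2 := hy
      rw [Subtype.dist_eq, Real.dist_eq] at h'
      rw [abs_sub_comm]
      exact h'.le
    have := hosc f f.2 n hnN x y hdist
    rw [Real.dist_eq]
    exact lt_of_le_of_lt this hεn
  -- transfer to bounded continuous functions and apply Arzelà–Ascoli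
  rw [← totallyBounded_image_iff
    (ContinuousMap.isUniformInducing_equivBoundedOfCompact X ℝ)]
  set e := ContinuousMap.equivBoundedOfCompact X ℝ with he
  have hcl : IsCompact (closure (e '' S)) := by
    refine BoundedContinuousFunction.arzela_ascoli (Set.Icc (-M) M) isCompact_Icc _ ?_ ?_
    · rintro g x ⟨f, hf, rfl⟩
      have := hbd f hf x
      have hef : (e f) x = f x := rfl
      rw [Set.mem_Icc, hef]
      constructor <;> [linarith [abs_le.mp this]; linarith [abs_le.mp this]]
    · intro x
      rw [Metric.equicontinuousAt_iff]
      intro ε hε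
      have := hequi x
      rw [Metric.equicontinuousAt_iff] at this
      obtain ⟨δ, hδ', h⟩ := this ε hε
      refine ⟨δ, hδ', fun y hy g => ?_⟩
      obtain ⟨f, hf, hfe⟩ := g.2
      have := h y hy ⟨f, hf⟩
      rw [← hfe]; exact this
  exact (hcl.totallyBounded).subset subset_closure
end

section
/- Let c ≥ 0 and let (f_n) be a sequence in C([0,1], ℝ) converging uniformly to f, such that for each n there exists g_n ∈ L²[0,1] with f_n(s) = ∫₀^s g_n(u) du for all s ∈ [0,1] and ∫₀¹ g_n(u)² du ≤ 2c. Then there exists g ∈ L²[0,1] with f(s) = ∫₀^s g(u) du for all s ∈ [0,1] and ∫₀¹ g(u)² du ≤ 2c. -/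
open MeasureTheory Set intervalIntegral InnerProductSpace

/-- Repair lemma: any `g` whose square is integrable and which represents a continuous
function `φ` via primitives on `[0,1]` can be replaced by a globally a.e. strongly measurable,
integrable `h` with pointwise smaller square. -/
lemma dirichlet_repair (φ g : ℝ → ℝ) (hφ : ContinuousOn φ (Set.Icc (0:ℝ) 1))
    (hg2 : IntegrableOn (fun u => g u ^ 2) (Set.Icc (0:ℝ) 1))
    (hrep : ∀ s ∈ Set.Icc (0:ℝ) 1, φ s = ∫ u in (0:ℝ)..s, g u) :
    ∃ h : ℝ → ℝ, AEStronglyMeasurable h (volume : Measure ℝ) ∧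
      IntegrableOn h (Set.Icc (0:ℝ) 1) ∧
      IntegrableOn (fun u => h u ^ 2) (Set.Icc (0:ℝ) 1) ∧
      (∀ u, h u ^ 2 ≤ g u ^ 2) ∧
      (∀ s ∈ Set.Icc (0:ℝ) 1, φ s = ∫ u in (0:ℝ)..s, h u) := by
  classical
  set S : Set ℝ := {s ∈ Set.Icc (0:ℝ) 1 | IntegrableOn g (Set.Ioc 0 s)} with hS
  have h0S : (0:ℝ) ∈ S := by
    refine ⟨by simp, ?_⟩
    simp [IntegrableOn]
  have hSbdd : BddAbove S := ⟨1, fun x hx => hx.1.2⟩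
  set T : ℝ := sSup S with hT
  have hT0 : 0 ≤ T := le_csSup hSbdd h0S
  have hT1 : T ≤ 1 := csSup_le ⟨0, h0S⟩ fun x hx => hx.1.2
  have key : ∀ s, s < T → IntegrableOn g (Set.Ioc 0 s) := by
    intro s hs
    obtain ⟨t, htS, hst⟩ := exists_lt_of_lt_csSup ⟨0, h0S⟩ hs
    exact htS.2.mono_set (Set.Ioc_subset_Ioc_right hst.le)
  -- the repaired function
  set h : ℝ → ℝ := Set.indicator (Set.Ioo 0 T) g with hh
  have hsq : ∀ u, h u ^ 2 ≤ g u ^ 2 := by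
    intro u
    by_cases hu : u ∈ Set.Ioo 0 T
    · simp [hh, Set.indicator_of_mem hu]
    · simp [hh, Set.indicator_of_notMem hu]
      positivity
  -- measurability
  have hIoo : Set.Ioo (0:ℝ) T = ⋃ k : ℕ, Set.Ioc 0 (T - 1/(k+1)) := by
    ext x
    simp only [Set.mem_Ioo, Set.mem_iUnion, Set.mem_Ioc]
    constructor
    · rintro ⟨hx0, hxT⟩
      obtain ⟨k, hk⟩ := exists_nat_one_div_lt (sub_pos.mpr hxT)
      exact ⟨k, hx0, by linarith⟩
    · rintro ⟨k, hx0, hxk⟩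
      have : (0:ℝ) < 1/(k+1) := by positivity
      exact ⟨hx0, by linarith⟩
  have hgmeas : AEStronglyMeasurable g ((volume : Measure ℝ).restrict (Set.Ioo 0 T)) := by
    rw [hIoo, aestronglyMeasurable_iUnion_iff]
    intro k
    rcases lt_or_ge (T - 1/(k+1)) 0 with hk | hk
    · rw [Set.Ioc_eq_empty (by linarith), Measure.restrict_empty]
      exact aestronglyMeasurable_zero_measure g
    · have : T - 1/(k+1) < T := by
        have : (0:ℝ) < 1/(k+1) := by positivity
        linarith
      exact (key _ this).aestronglyMeasurable
  have hmeas : AEStronglyMeasurable h (volume : Measure ℝ) := by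
    rw [hh, aestronglyMeasurable_indicator_iff measurableSet_Ioo]
    exact hgmeas
  -- integrability of h and h²
  have hh2int : IntegrableOn (fun u => h u ^ 2) (Set.Icc (0:ℝ) 1) := by
    refine Integrable.mono' hg2 ((hmeas.pow 2).restrict) ?_
    filter_upwards with u
    simpa [Real.norm_eq_abs, abs_of_nonneg (sq_nonneg (h u))] using hsq u
  have hbound : IntegrableOn (fun u => 1/2 * g u ^ 2 + 1/2) (Set.Icc (0:ℝ) 1) := by
    refine (hg2.const_mul (1/2)).add ?_
    exact integrableOn_const (C := (1/2:ℝ)) (by simp [Real.volume_Icc])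
  have hhint : IntegrableOn h (Set.Icc (0:ℝ) 1) := by
    refine hbound.mono' hmeas.restrict ?_
    filter_upwards with u
    have h1 : |h u| ≤ (1 + h u ^ 2) / 2 := by nlinarith [sq_nonneg (|h u| - 1), sq_abs (h u)]
    have h2 : h u ^ 2 ≤ g u ^ 2 := hsq u
    rw [Real.norm_eq_abs]
    calc |h u| ≤ (1 + h u ^2)/2 := h1
      _ ≤ 1/2 * g u ^ 2 + 1/2 := by nlinarith
      _ = (fun u => 1/2 * g u ^2 + 1/2) u := rfl
  -- the primitive of h
  set ψ : ℝ → ℝ := fun s => ∫ u in (0:ℝ)..s, h u with hψ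
  have hψcont : ContinuousOn ψ (Set.Icc (0:ℝ) 1) := by
    have h01 : Set.uIcc (0:ℝ) 1 = Set.Icc 0 1 := Set.uIcc_of_le (by norm_num)
    have := intervalIntegral.continuousOn_primitive_interval (a := (0:ℝ)) (b := 1)
      (μ := volume) (f := h) (by rwa [h01])
    rwa [h01] at this
  have hlt : ∀ s ∈ Set.Icc (0:ℝ) 1, s < T → φ s = ψ s := by
    intro s hs hsT
    rw [hrep s hs]
    show (∫ u in (0:ℝ)..s, g u) = ∫ u in (0:ℝ)..s, h u
    rw [intervalIntegral.integral_of_le hs.1, intervalIntegral.integral_of_le hs.1]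
    refine setIntegral_congr_fun measurableSet_Ioc ?_
    intro u hu
    have hu' : u ∈ Set.Ioo 0 T := ⟨hu.1, lt_of_le_of_lt hu.2 hsT⟩
    exact (Set.indicator_of_mem hu' g).symm
  have hφz : ∀ s ∈ Set.Ioc T 1, φ s = 0 := by
    intro s hs
    have hs01 : s ∈ Set.Icc (0:ℝ) 1 := ⟨le_trans hT0 hs.1.le, hs.2⟩
    rw [hrep s hs01]
    apply intervalIntegral.integral_undef
    intro hint
    have hmem : s ∈ S := ⟨hs01, by rwa [intervalIntegrable_iff, Set.uIoc_of_le hs01.1] at hint⟩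
    exact absurd (le_csSup hSbdd hmem) (not_le.mpr hs.1)
  have hφT : φ T = ψ T := by
    rcases eq_or_lt_of_le hT0 with h0 | h0
    · have hφ0 : φ 0 = 0 := by rw [hrep 0 (by simp)]; simp
      have hψ0 : ψ 0 = 0 := by simp [hψ]
      rw [← h0, hφ0, hψ0]
    · have hTmem : T ∈ Set.Icc (0:ℝ) 1 := ⟨hT0, hT1⟩
      have hne : (nhdsWithin T (Set.Ioo 0 T)).NeBot := by
        apply mem_closure_iff_nhdsWithin_neBot.mp
        rw [closure_Ioo (ne_of_lt h0)]
        exact ⟨hT0, le_refl T⟩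
      have hsub : Set.Ioo (0:ℝ) T ⊆ Set.Icc 0 1 := fun x hx => ⟨hx.1.le, hx.2.le.trans hT1⟩
      have t1 : Filter.Tendsto φ (nhdsWithin T (Set.Ioo 0 T)) (nhds (φ T)) :=
        (hφ T hTmem).mono hsub
      have t2 : Filter.Tendsto ψ (nhdsWithin T (Set.Ioo 0 T)) (nhds (ψ T)) :=
        (hψcont T hTmem).mono hsub
      have heq : ∀ᶠ x in nhdsWithin T (Set.Ioo 0 T), φ x = ψ x := by
        filter_upwards [self_mem_nhdsWithin] with x hx
        exact hlt x (hsub hx) hx.2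
      exact tendsto_nhds_unique (t1.congr' heq) t2
  refine ⟨h, hmeas, hhint, hh2int, hsq, fun s hs => ?_⟩
  rcases lt_trichotomy s T with hsT | hsT | hsT
  · exact hlt s hs hsT
  · rw [hsT]; exact hφT
  · -- s > T
    have hT1' : T < 1 := lt_of_lt_of_le hsT hs.2
    have hφT0 : φ T = 0 := by
      have hne : (nhdsWithin T (Set.Ioc T 1)).NeBot := by
        apply mem_closure_iff_nhdsWithin_neBot.mp
        rw [closure_Ioc (ne_of_lt hT1')]
        exact ⟨le_refl T, hT1⟩
      have hsub : Set.Ioc T 1 ⊆ Set.Icc (0:ℝ) 1 := fun x hx => ⟨le_trans hT0 hx.1.le, hx.2⟩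
      have t1 : Filter.Tendsto φ (nhdsWithin T (Set.Ioc T 1)) (nhds (φ T)) :=
        (hφ T ⟨hT0, hT1⟩).mono hsub
      have t2 : Filter.Tendsto φ (nhdsWithin T (Set.Ioc T 1)) (nhds 0) := by
        refine Filter.Tendsto.congr' ?_ tendsto_const_nhds
        filter_upwards [self_mem_nhdsWithin] with x hx
        exact (hφz x hx).symm
      exact tendsto_nhds_unique t1 t2
    have hint1 : IntervalIntegrable h volume 0 T :=
      (hhint.mono_set (by rw [Set.uIcc_of_le hT0]; exact Set.Icc_subset_Icc le_rfl hT1)).intervalIntegrable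
    have hint2 : IntervalIntegrable h volume T s :=
      (hhint.mono_set (by rw [Set.uIcc_of_le hsT.le]; exact Set.Icc_subset_Icc hT0 hs.2)).intervalIntegrable
    have hz : (∫ u in T..s, h u) = 0 := by
      rw [intervalIntegral.integral_of_le hsT.le]
      have : ∀ u ∈ Set.Ioc T s, h u = (fun _ => (0:ℝ)) u := by
        intro u hu
        exact Set.indicator_of_notMem (fun hmem => absurd hmem.2 (not_lt.mpr hu.1.le)) g
      rw [setIntegral_congr_fun measurableSet_Ioc this]
      simp
    have hψs : ψ s = ψ T := by
      have := intervalIntegral.integral_add_adjacent_intervals hint1 hint2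
      simp only [hψ]
      rw [← this, hz, add_zero]
    rw [hφz s ⟨hsT, hs.2⟩]
    have hfin : ψ s = 0 := by rw [hψs, ← hφT, hφT0]
    exact hfin.symm

/-- Lower-semicontinuity (closedness of level sets) of the Dirichlet energy, used in the
proof of Proposition 15: a uniform limit of absolutely continuous functions on `[0,1]` with
square-integrable derivatives of energy at most `c` is again absolutely continuous with
energy at most `c`. -/
theorem dirichlet_energy_level_set_closed_under_uniform_limits
    (c : ℝ) (hc : 0 ≤ c) (F : ℕ → ℝ → ℝ) (f : ℝ → ℝ) (g : ℕ → ℝ → ℝ)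
    (hFcont : ∀ n, ContinuousOn (F n) (Set.Icc (0 : ℝ) 1))
    (hconv : TendstoUniformlyOn F f Filter.atTop (Set.Icc (0 : ℝ) 1))
    (hgL2 : ∀ n, IntegrableOn (fun u => g n u ^ 2) (Set.Icc (0 : ℝ) 1))
    (hrep : ∀ n, ∀ s ∈ Set.Icc (0 : ℝ) 1, F n s = ∫ u in (0 : ℝ)..s, g n u)
    (henergy : ∀ n, (∫ u in (0 : ℝ)..1, g n u ^ 2) ≤ 2 * c) :
    ∃ G : ℝ → ℝ, IntegrableOn (fun u => G u ^ 2) (Set.Icc (0 : ℝ) 1) ∧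
      (∀ s ∈ Set.Icc (0 : ℝ) 1, f s = ∫ u in (0 : ℝ)..s, G u) ∧
      (∫ u in (0 : ℝ)..1, G u ^ 2) ≤ 2 * c := by
  classical
  choose h hmeas hint hint2 hsq hrep' using fun n =>
    dirichlet_repair (F n) (g n) (hFcont n) (hgL2 n) (hrep n)
  have henergy' : ∀ n, (∫ u in (0:ℝ)..1, h n u ^ 2) ≤ 2 * c := by
    intro n
    refine le_trans ?_ (henergy n)
    rw [intervalIntegral.integral_of_le (by norm_num : (0:ℝ) ≤ 1),
        intervalIntegral.integral_of_le (by norm_num : (0:ℝ) ≤ 1)]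
    exact setIntegral_mono_on ((hint2 n).mono_set Set.Ioc_subset_Icc_self)
      ((hgL2 n).mono_set Set.Ioc_subset_Icc_self) measurableSet_Ioc fun u _ => hsq n u
  set μ : Measure ℝ := volume.restrict (Set.Ioc (0:ℝ) 1) with hμ
  have hμfin : IsFiniteMeasure μ := by
    constructor
    rw [hμ, Measure.restrict_apply_univ, Real.volume_Ioc]
    simp
  have hmem : ∀ n, MemLp (h n) 2 μ := by
    intro n
    rw [memLp_two_iff_integrable_sq ((hmeas n).restrict)]
    exact (hint2 n).mono_set Set.Ioc_subset_Icc_self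
  set Gs : ℕ → Lp ℝ 2 μ := fun n => (hmem n).toLp (h n) with hGs
  -- inner products with the approximants
  have hinner : ∀ n (y : Lp ℝ 2 μ), (inner ℝ (Gs n) y : ℝ) = ∫ a, h n a * y a ∂μ := by
    intro n y
    rw [L2.inner_def]
    apply MeasureTheory.integral_congr_ae
    filter_upwards [(hmem n).coeFn_toLp] with a ha
    simp [RCLike.inner_apply, hGs, ha, mul_comm]
  -- norm bound
  have hGnorm : ∀ n, ‖Gs n‖ ≤ Real.sqrt (2*c) := by
    intro n
    rw [← Real.sqrt_sq (norm_nonneg (Gs n))]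
    apply Real.sqrt_le_sqrt
    have h1 : ‖Gs n‖ ^ 2 = (inner ℝ (Gs n) (Gs n) : ℝ) := (real_inner_self_eq_norm_sq _).symm
    rw [h1, hinner n (Gs n)]
    have h2 : (∫ a, h n a * (Gs n) a ∂μ) = ∫ a, h n a ^ 2 ∂μ := by
      apply MeasureTheory.integral_congr_ae
      filter_upwards [(hmem n).coeFn_toLp] with a ha
      rw [ha, sq]
    rw [h2]
    have h3 : (∫ a, h n a ^ 2 ∂μ) = ∫ u in (0:ℝ)..1, h n u ^ 2 := by
      rw [intervalIntegral.integral_of_le (by norm_num : (0:ℝ) ≤ 1), hμ]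
    rw [h3]
    exact henergy' n
  -- ultrafilter and weak-* limit
  set U : Ultrafilter ℕ := Ultrafilter.of Filter.atTop with hUdef
  have hU : (U : Filter ℕ) ≤ Filter.atTop := Ultrafilter.of_le _
  set D : ℕ → WeakDual ℝ (Lp ℝ 2 μ) :=
    fun n => StrongDual.toWeakDual (toDual ℝ (Lp ℝ 2 μ) (Gs n)) with hD
  have hK : IsCompact (WeakDual.toStrongDual ⁻¹'
      Metric.closedBall 0 (Real.sqrt (2*c))) :=
    WeakDual.isCompact_closedBall (0 : StrongDual ℝ (Lp ℝ 2 μ)) (Real.sqrt (2*c))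
  have hmemK : ∀ n, D n ∈ WeakDual.toStrongDual ⁻¹'
      Metric.closedBall 0 (Real.sqrt (2*c)) := by
    intro n
    simp only [Set.mem_preimage, Metric.mem_closedBall, dist_zero_right, hD]
    rw [show WeakDual.toStrongDual (StrongDual.toWeakDual (toDual ℝ (Lp ℝ 2 μ) (Gs n)))
        = toDual ℝ (Lp ℝ 2 μ) (Gs n) from rfl]
    rw [(toDual ℝ (Lp ℝ 2 μ)).norm_map (Gs n)]
    exact hGnorm n
  obtain ⟨Λ, hΛmem, hΛ⟩ := hK.ultrafilter_le_nhds (U.map D) (by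
    rw [Ultrafilter.coe_map, Filter.le_principal_iff]
    exact Filter.mem_map.mpr (Filter.univ_mem' hmemK))
  rw [Ultrafilter.coe_map] at hΛ
  have htendD : Filter.Tendsto D (U : Filter ℕ) (nhds Λ) := hΛ
  have hevalD := tendsto_iff_forall_eval_tendsto_topDualPairing.mp htendD
  set Ginf : Lp ℝ 2 μ := (toDual ℝ (Lp ℝ 2 μ)).symm (WeakDual.toStrongDual Λ) with hGinf
  have hGinner : ∀ y : Lp ℝ 2 μ, (inner ℝ Ginf y : ℝ) = Λ y := by
    intro y
    rw [hGinf]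
    exact toDual_symm_apply
  have heval : ∀ y : Lp ℝ 2 μ, Filter.Tendsto (fun n => (inner ℝ (Gs n) y : ℝ))
      (U : Filter ℕ) (nhds (inner ℝ Ginf y : ℝ)) := by
    intro y
    have := hevalD y
    rw [hGinner y]
    exact this
  have hGinfnorm : ‖Ginf‖ ≤ Real.sqrt (2*c) := by
    have : ‖WeakDual.toStrongDual Λ‖ ≤ Real.sqrt (2*c) := by
      simpa [Metric.mem_closedBall, dist_zero_right] using hΛmem
    rw [hGinf]
    rw [(toDual ℝ (Lp ℝ 2 μ)).symm.norm_map]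
    exact this
  -- the limit function
  set G : ℝ → ℝ := ⇑Ginf with hG
  have hGL2 : Integrable (fun x => G x ^ 2) μ :=
    (memLp_two_iff_integrable_sq (Lp.aestronglyMeasurable Ginf)).mp (Lp.memLp Ginf)
  refine ⟨G, ?_, ?_, ?_⟩
  · rw [integrableOn_Icc_iff_integrableOn_Ioc]
    exact hGL2
  · intro s hs
    have hμs : μ (Set.Ioc 0 s) ≠ ⊤ := measure_ne_top μ _
    set χ : Lp ℝ 2 μ := indicatorConstLp 2 measurableSet_Ioc hμs (1:ℝ) with hχ
    have hip : ∀ y : Lp ℝ 2 μ, (inner ℝ χ y : ℝ) = ∫ x in Set.Ioc 0 s, y x ∂μ :=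
      fun y => L2.inner_indicatorConstLp_one measurableSet_Ioc hμs y
    have hres : μ.restrict (Set.Ioc 0 s) = volume.restrict (Set.Ioc 0 s) := by
      rw [hμ, Measure.restrict_restrict measurableSet_Ioc,
        Set.inter_eq_self_of_subset_left (Set.Ioc_subset_Ioc_right hs.2)]
    have hχGn : ∀ n, (inner ℝ χ (Gs n) : ℝ) = F n s := by
      intro n
      rw [hip (Gs n)]
      have : (∫ x in Set.Ioc 0 s, (Gs n) x ∂μ) = ∫ x in Set.Ioc 0 s, h n x ∂μ := by
        apply MeasureTheory.integral_congr_ae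
        exact ae_restrict_of_ae ((hmem n).coeFn_toLp)
      rw [this, hres, ← intervalIntegral.integral_of_le hs.1, ← hrep' n s hs]
    have h1 : Filter.Tendsto (fun n => F n s) (U : Filter ℕ) (nhds (inner ℝ Ginf χ : ℝ)) := by
      refine (heval χ).congr fun n => ?_
      rw [← hχGn n, real_inner_comm]
    have h2 : Filter.Tendsto (fun n => F n s) (U : Filter ℕ) (nhds (f s)) :=
      (hconv.tendsto_at hs).mono_left hU
    have hfs : f s = (inner ℝ Ginf χ : ℝ) := tendsto_nhds_unique h2 h1
    rw [hfs, real_inner_comm, hip Ginf, hres, ← intervalIntegral.integral_of_le hs.1]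
  · have hsq' : (∫ u in (0:ℝ)..1, G u ^ 2) = ‖Ginf‖ ^ 2 := by
      rw [← real_inner_self_eq_norm_sq, L2.inner_def,
        intervalIntegral.integral_of_le (by norm_num : (0:ℝ) ≤ 1), ← hμ]
      apply MeasureTheory.integral_congr_ae
      filter_upwards with a
      simp [RCLike.inner_apply, sq, hG]
    rw [hsq']
    calc ‖Ginf‖ ^ 2 ≤ Real.sqrt (2*c) ^ 2 := by
          exact pow_le_pow_left₀ (norm_nonneg _) hGinfnorm 2
      _ = 2*c := Real.sq_sqrt (by linarith)
end

section
/- On the probability space [0,1] with the Borel σ-algebra and Lebesgue measure P, define for T ≥ 0 and ω ∈ [0,1]: X_T(ω) = e^{2T} if there exists n ∈ ℕ with T − n ∈ [ω − e^{−4T}, ω + e^{−4T}), and X_T(ω) = e^{T} otherwise. Then for every ω ∈ [0,1], limsup_{T→∞} (1/T)·log X_T(ω) = 2. -/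
open Filter

/-- The process of the appendix counterexample: `X T ω = e^{2T}` if `T − n` lies in the
window `[ω − e^{−4T}, ω + e^{−4T})` for some `n ∈ ℕ`, and `X T ω = e^{T}` otherwise. -/
noncomputable def appendixX (T ω : ℝ) : ℝ :=
  open scoped Classical in
  if ∃ n : ℕ, T - n ∈ Set.Ico (ω - Real.exp (-4 * T)) (ω + Real.exp (-4 * T)) then
    Real.exp (2 * T)
  else Real.exp T

lemma appendixX_le (ω T : ℝ) (hT : 1 ≤ T) :
    (1 / T) * Real.log (appendixX T ω) ≤ 2 := by
  have hT0 : 0 < T := lt_of_lt_of_le one_pos hT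
  unfold appendixX
  split
  · rw [Real.log_exp]
    field_simp
    norm_num
  · rw [Real.log_exp]
    rw [one_div, inv_mul_cancel₀ (ne_of_gt hT0)]
    norm_num

lemma appendixX_eq (ω : ℝ) (hω : 0 ≤ ω) (n : ℕ) (hn : 1 ≤ n) :
    (1 / ((n : ℝ) + ω)) * Real.log (appendixX ((n : ℝ) + ω) ω) = 2 := by
  set T : ℝ := (n : ℝ) + ω with hTdef
  have hT0 : 0 < T := by
    have : (1 : ℝ) ≤ (n : ℝ) := by exact_mod_cast hn
    linarith
  have hcond : ∃ m : ℕ, T - m ∈ Set.Ico (ω - Real.exp (-4 * T)) (ω + Real.exp (-4 * T)) := by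
    have hTn : T - (n : ℝ) = ω := by rw [hTdef]; ring
    have := Real.exp_pos (-4 * T)
    exact ⟨n, by rw [hTn]; constructor <;> linarith⟩
  rw [appendixX, if_pos hcond, Real.log_exp]
  field_simp

/-- First claim of the appendix counterexample: for every `ω ∈ [0,1]`, the pointwise
exponential growth rate `limsup_{T→∞} (1/T) log X_T(ω)` equals `2`. -/
theorem appendixX_pointwise_limsup_eq_two :
    ∀ ω ∈ Set.Icc (0 : ℝ) 1,
      Filter.limsup (fun T : ℝ => (1 / T) * Real.log (appendixX T ω)) Filter.atTop = 2 := by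
  intro ω hω
  have hle : ∀ᶠ T in atTop, (1 / T) * Real.log (appendixX T ω) ≤ 2 :=
    eventually_atTop.2 ⟨1, fun T hT => appendixX_le ω T hT⟩
  have hfreq : ∃ᶠ T in atTop, 2 ≤ (1 / T) * Real.log (appendixX T ω) := by
    rw [frequently_atTop]
    intro a
    obtain ⟨n, hn⟩ := exists_nat_ge (max a 1)
    refine ⟨(n : ℝ) + ω, ?_, ?_⟩
    · have := le_max_left a 1
      linarith [hω.1, le_trans this hn]
    · rw [appendixX_eq ω hω.1 n (by exact_mod_cast le_trans (le_max_right a 1) hn)]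
  refine le_antisymm ?_ ?_
  · exact limsup_le_of_le (IsCoboundedUnder.of_frequently_ge hfreq) hle
  · exact le_limsup_of_frequently_le hfreq ⟨2, hle⟩
end

section
/- On the probability space [0,1] with the Borel σ-algebra and Lebesgue measure P, define for T ≥ 0 and ω ∈ [0,1]: X_T(ω) = e^{2T} if there exists n ∈ ℕ with T − n ∈ [ω − e^{−4T}, ω + e^{−4T}), and X_T(ω) = e^{T} otherwise. Then lim_{T→∞} (1/T)·log E[X_T] = 1, where E denotes expectation (integration over ω ∈ [0,1] with respect to Lebesgue measure). -/
open Filter MeasureTheory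

namespace AppAux

noncomputable def eps (T : ℝ) : ℝ := Real.exp (-4 * T)

def badSet (T : ℝ) : Set ℝ := ⋃ n : ℕ, Set.Ioc (T - n - eps T) (T - n + eps T)

lemma badSet_meas (T : ℝ) : MeasurableSet (badSet T) :=
  MeasurableSet.iUnion fun _ => measurableSet_Ioc

open scoped Classical in
lemma appendixX_eq (T : ℝ) :
    appendixX T = (badSet T).piecewise (fun _ => Real.exp (2 * T)) (fun _ => Real.exp T) := by
  funext ω
  by_cases h : ∃ n : ℕ, T - n ∈ Set.Ico (ω - Real.exp (-4 * T)) (ω + Real.exp (-4 * T))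
  · rw [appendixX, if_pos h, Set.piecewise_eq_of_mem]
    obtain ⟨n, h1, h2⟩ := h
    refine Set.mem_iUnion.2 ⟨n, Set.mem_Ioc.2 ⟨?_, ?_⟩⟩ <;> simp only [eps] <;> linarith
  · rw [appendixX, if_neg h, Set.piecewise_eq_of_notMem]
    intro hm
    obtain ⟨n, h1⟩ := Set.mem_iUnion.1 hm
    rw [Set.mem_Ioc] at h1
    simp only [eps] at h1
    exact h ⟨n, Set.mem_Ico.2 ⟨by linarith [h1.1, h1.2], by linarith [h1.1, h1.2]⟩⟩

end AppAux

namespace AppAux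

lemma eps_pos (T : ℝ) : 0 < eps T := Real.exp_pos _

open scoped Classical in
lemma integral_eq (T : ℝ) :
    ∫ ω in Set.Icc (0:ℝ) 1, appendixX T ω
      = Real.exp T + (Real.exp (2*T) - Real.exp T)
          * (volume (badSet T ∩ Set.Icc 0 1)).toReal := by
  rw [appendixX_eq]
  have hpt : ∀ ω, (badSet T).piecewise (fun _ => Real.exp (2*T)) (fun _ => Real.exp T) ω
      = Real.exp T + (badSet T).indicator (fun _ => Real.exp (2*T) - Real.exp T) ω := by
    intro ω
    by_cases h : ω ∈ badSet T
    · rw [Set.piecewise_eq_of_mem _ _ _ h, Set.indicator_of_mem h]; ring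
    · rw [Set.piecewise_eq_of_notMem _ _ _ h, Set.indicator_of_notMem h]; ring
  have hind : Integrable ((badSet T).indicator (fun _ => Real.exp (2*T) - Real.exp T))
      (volume.restrict (Set.Icc (0:ℝ) 1)) := by
    rw [integrable_indicator_iff (badSet_meas T)]
    have : IsFiniteMeasure (volume.restrict (Set.Icc (0:ℝ) 1)) :=
      ⟨by rw [Measure.restrict_apply_univ, Real.volume_Icc]; norm_num⟩
    exact integrableOn_const (measure_lt_top _ _).ne
  simp_rw [hpt]
  rw [integral_add (integrable_const _) hind, integral_const,
    integral_indicator_const _ (badSet_meas T)]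
  simp only [Measure.real]
  rw [Measure.restrict_apply (badSet_meas T),
    Measure.restrict_apply_univ, Real.volume_Icc]
  norm_num
  ring

lemma meas_bound {T : ℝ} (hT : 2 ≤ T) :
    (volume (badSet T ∩ Set.Icc 0 1)).toReal ≤ 8 * eps T := by
  have heps1 : eps T ≤ 1 := by
    rw [eps, ← Real.exp_zero]
    exact Real.exp_le_exp.2 (by linarith)
  have heps0 : 0 < eps T := eps_pos T
  have hfl : (⌊T⌋₊ : ℝ) ≤ T := Nat.floor_le (by linarith)
  have hfl2 : T < ⌊T⌋₊ + 1 := Nat.lt_floor_add_one T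
  have hsub : badSet T ∩ Set.Icc 0 1 ⊆
      ⋃ n ∈ Finset.Ico (⌊T⌋₊ - 2) (⌊T⌋₊ + 2), Set.Ioc (T - n - eps T) (T - n + eps T) := by
    rintro ω ⟨hS, hω0, hω1⟩
    obtain ⟨n, hn⟩ := Set.mem_iUnion.1 hS
    rw [Set.mem_Ioc] at hn
    have h1 : (⌊T⌋₊ : ℝ) < (n : ℝ) + 2 := by linarith [hn.1]
    have h1' : ⌊T⌋₊ < n + 2 := by exact_mod_cast h1
    have h2 : (n : ℝ) < (⌊T⌋₊ : ℝ) + 2 := by linarith [hn.2]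
    have h2' : n < ⌊T⌋₊ + 2 := by exact_mod_cast h2
    have hnmem : n ∈ Finset.Ico (⌊T⌋₊ - 2) (⌊T⌋₊ + 2) := by
      rw [Finset.mem_Ico]; omega
    exact Set.mem_biUnion hnmem (Set.mem_Ioc.2 hn)
  have hmeas : volume (badSet T ∩ Set.Icc 0 1)
      ≤ ∑ n ∈ Finset.Ico (⌊T⌋₊ - 2) (⌊T⌋₊ + 2), volume (Set.Ioc (T - n - eps T) (T - n + eps T)) :=
    le_trans (measure_mono hsub) (measure_biUnion_finset_le _ _)
  have hvol : ∀ n : ℕ, volume (Set.Ioc (T - n - eps T) (T - n + eps T))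
      = ENNReal.ofReal (2 * eps T) := by
    intro n
    rw [Real.volume_Ioc]
    ring_nf
  rw [Finset.sum_congr rfl (fun n _ => hvol n), Finset.sum_const] at hmeas
  have hcard : (Finset.Ico (⌊T⌋₊ - 2) (⌊T⌋₊ + 2)).card ≤ 4 := by
    rw [Nat.card_Ico]; omega
  have hfin : volume (badSet T ∩ Set.Icc 0 1) ≤ ENNReal.ofReal (8 * eps T) := by
    calc volume (badSet T ∩ Set.Icc 0 1)
        ≤ (Finset.Ico (⌊T⌋₊ - 2) (⌊T⌋₊ + 2)).card • ENNReal.ofReal (2 * eps T) := hmeas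
      _ ≤ 4 • ENNReal.ofReal (2 * eps T) := by
          rw [nsmul_eq_mul, nsmul_eq_mul]
          exact mul_le_mul_left (Nat.cast_le.2 hcard) _
      _ = ENNReal.ofReal (8 * eps T) := by
          rw [nsmul_eq_mul, show ((4:ℕ):ENNReal) = ENNReal.ofReal 4 by simp,
            ← ENNReal.ofReal_mul (by norm_num)]
          ring_nf
  exact ENNReal.toReal_le_of_le_ofReal (by positivity) hfin

lemma E_bounds {T : ℝ} (hT : 2 ≤ T) :
    Real.exp T ≤ (∫ ω in Set.Icc (0:ℝ) 1, appendixX T ω) ∧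
    (∫ ω in Set.Icc (0:ℝ) 1, appendixX T ω) ≤ Real.exp T * (1 + 8 * Real.exp (-3 * T)) := by
  rw [integral_eq]
  have hm0 : 0 ≤ (volume (badSet T ∩ Set.Icc 0 1)).toReal := ENNReal.toReal_nonneg
  have hm : (volume (badSet T ∩ Set.Icc 0 1)).toReal ≤ 8 * eps T := meas_bound hT
  have hee : Real.exp T ≤ Real.exp (2 * T) := Real.exp_le_exp.2 (by linarith)
  constructor
  · nlinarith
  · have key : Real.exp (2 * T) * (8 * eps T) = Real.exp T * (8 * Real.exp (-3 * T)) := by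
      rw [eps, show Real.exp (2*T) * (8 * Real.exp (-4*T)) = 8 * (Real.exp (2*T) * Real.exp (-4*T)) by ring,
        show Real.exp T * (8 * Real.exp (-3*T)) = 8 * (Real.exp T * Real.exp (-3*T)) by ring,
        ← Real.exp_add, ← Real.exp_add]
      ring_nf
    nlinarith [Real.exp_pos T, Real.exp_pos (2*T), eps_pos T]

end AppAux

/-- Second claim of the appendix counterexample: the expected exponential growth rate
`lim_{T→∞} (1/T) log E[X_T]` equals `1` (expectation over `ω ∈ [0,1]` with Lebesgue
measure), strictly smaller than the pointwise limsup rate `2`. -/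
theorem appendixX_expectation_growth_rate_eq_one :
    Filter.Tendsto
      (fun T : ℝ => (1 / T) * Real.log (∫ ω in Set.Icc (0 : ℝ) 1, appendixX T ω))
      Filter.atTop (nhds 1) := by
  have hub : Filter.Tendsto (fun T : ℝ => 1 + 8 * Real.exp (-3 * T)) Filter.atTop (nhds 1) := by
    have h3 : Filter.Tendsto (fun T : ℝ => -3 * T) Filter.atTop Filter.atBot := by
      apply Filter.Tendsto.const_mul_atTop_of_neg (by norm_num : (-3:ℝ) < 0) Filter.tendsto_id
    have := (Real.tendsto_exp_atBot.comp h3).const_mul (8:ℝ)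
    have h := (tendsto_const_nhds (x := (1:ℝ)) (f := Filter.atTop)).add this
    simpa using h
  refine tendsto_of_tendsto_of_tendsto_of_le_of_le' tendsto_const_nhds hub ?_ ?_
  · filter_upwards [Filter.eventually_ge_atTop (2:ℝ)] with T hT
    have hE := (AppAux.E_bounds hT).1
    have hlog : T ≤ Real.log (∫ ω in Set.Icc (0:ℝ) 1, appendixX T ω) := by
      calc T = Real.log (Real.exp T) := (Real.log_exp T).symm
        _ ≤ _ := Real.log_le_log (Real.exp_pos T) hE
    have hTpos : 0 < T := by linarith
    calc (1:ℝ) = (1/T) * T := by field_simp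
      _ ≤ (1/T) * Real.log _ := by
          apply mul_le_mul_of_nonneg_left hlog (by positivity)
  · filter_upwards [Filter.eventually_ge_atTop (2:ℝ)] with T hT
    have hTpos : 0 < T := by linarith
    have hE1 := (AppAux.E_bounds hT).1
    have hE2 := (AppAux.E_bounds hT).2
    have hEpos : 0 < ∫ ω in Set.Icc (0:ℝ) 1, appendixX T ω :=
      lt_of_lt_of_le (Real.exp_pos T) hE1
    have hx : (0:ℝ) < 1 + 8 * Real.exp (-3 * T) := by positivity
    have hlog : Real.log (∫ ω in Set.Icc (0:ℝ) 1, appendixX T ω)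
        ≤ T + 8 * Real.exp (-3 * T) := by
      calc Real.log (∫ ω in Set.Icc (0:ℝ) 1, appendixX T ω)
          ≤ Real.log (Real.exp T * (1 + 8 * Real.exp (-3 * T))) :=
            Real.log_le_log hEpos hE2
        _ = T + Real.log (1 + 8 * Real.exp (-3 * T)) := by
            rw [Real.log_mul (Real.exp_ne_zero T) (ne_of_gt hx), Real.log_exp]
        _ ≤ T + 8 * Real.exp (-3 * T) := by
            have := Real.log_le_sub_one_of_pos hx
            linarith
    calc (1/T) * Real.log (∫ ω in Set.Icc (0:ℝ) 1, appendixX T ω)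
        ≤ (1/T) * (T + 8 * Real.exp (-3 * T)) :=
          mul_le_mul_of_nonneg_left hlog (by positivity)
      _ = 1 + (8 * Real.exp (-3 * T)) / T := by field_simp
      _ ≤ 1 + 8 * Real.exp (-3 * T) := by
          have h8 : 0 ≤ 8 * Real.exp (-3 * T) := by positivity
          have : (8 * Real.exp (-3 * T)) / T ≤ 8 * Real.exp (-3 * T) := by
            apply div_le_self h8 (by linarith)
          linarith
end

section
/- Let r > 0, m > 0, θ ∈ (0,1], and let f : [0,1] → ℝ be twice continuously differentiable with f(0) = 0 and rmφ − (1/2)∫₀^φ f'(s)² ds > 0 for all φ ∈ (0,θ]. Then for every ε > 0 and δ > 0 there exists a twice continuously differentiable g : [0,1] → ℝ with g(0) = 0, g'(0) = 0, sup_{s∈[0,θ]} |f(s) − g(s)| ≤ ε/2, rmφ − (1/2)∫₀^φ g'(s)² ds > 0 for all φ ∈ (0,θ], and rmθ − (1/2)∫₀^θ g'(s)² ds > rmθ − (1/2)∫₀^θ f'(s)² ds − δ/2. -/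
set_option maxHeartbeats 2000000 in
theorem flat_start_modification_aux
    (r m θ : ℝ) (hr : 0 < r) (hm : 0 < m) (hθ : θ ∈ Set.Ioc (0 : ℝ) 1)
    (f : ℝ → ℝ) (hf : ContDiff ℝ 2 f) (hf0 : f 0 = 0)
    (hpos : ∀ φ ∈ Set.Ioc (0 : ℝ) θ,
      0 < r * m * φ - (1 / 2) * (∫ s in (0 : ℝ)..φ, (deriv f s) ^ 2))
    (ε δ : ℝ) (hε : 0 < ε) (hδ : 0 < δ) :
    ∃ g : ℝ → ℝ, ContDiff ℝ 2 g ∧ g 0 = 0 ∧ deriv g 0 = 0 ∧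
      (∀ s ∈ Set.Icc (0 : ℝ) θ, |f s - g s| ≤ ε / 2) ∧
      (∀ φ ∈ Set.Ioc (0 : ℝ) θ,
        0 < r * m * φ - (1 / 2) * (∫ s in (0 : ℝ)..φ, (deriv g s) ^ 2)) ∧
      r * m * θ - (1 / 2) * (∫ s in (0 : ℝ)..θ, (deriv g s) ^ 2) >
        r * m * θ - (1 / 2) * (∫ s in (0 : ℝ)..θ, (deriv f s) ^ 2) - δ / 2 := by
  -- Continuity of `deriv f` and a bound `C` on `[0, 1] ⊇ [0, θ]`.
  have cf' : Continuous (deriv f) := hf.continuous_deriv one_le_two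
  obtain ⟨C, hC⟩ := (isCompact_Icc : IsCompact (Set.Icc (0:ℝ) θ)).exists_bound_of_continuousOn
    cf'.continuousOn
  have hC0 : 0 ≤ C := le_trans (norm_nonneg _) (hC 0 ⟨le_refl _, hθ.1.le⟩)
  -- The small parameter η.
  set η : ℝ := ε / (8 * (C + 1)) with hηdef
  have hη : 0 < η := by positivity
  have hη8 : η * (8 * (C + 1)) = ε := by
    rw [hηdef]; field_simp
  clear_value η
  -- The reparametrization ρ and its derivative ρ'.
  set ρ : ℝ → ℝ := fun s => s - η * Real.arctan (s / η) with hρdef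
  set ρ' : ℝ → ℝ := fun s => 1 - 1 / (1 + (s / η) ^ 2) with hρ'def
  have hρd : ∀ s, HasDerivAt ρ (ρ' s) s := by
    intro s
    have h1 : HasDerivAt (fun x : ℝ => x / η) (1 / η) s := by
      simpa using (hasDerivAt_id s).div_const η
    have h2 : HasDerivAt Real.arctan (1 / (1 + (s / η) ^ 2)) (s / η) :=
      Real.hasDerivAt_arctan _
    have h3 : HasDerivAt (fun x : ℝ => Real.arctan (x / η))
        ((1 / (1 + (s / η) ^ 2)) * (1 / η)) s := by have := h2.comp s h1; exact this
    have h4 : HasDerivAt (fun x : ℝ => x - η * Real.arctan (x / η))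
        (1 - η * ((1 / (1 + (s / η) ^ 2)) * (1 / η))) s := (hasDerivAt_id s).sub (h3.const_mul η)
    have hne : (1 : ℝ) + (s / η) ^ 2 ≠ 0 := by positivity
    convert h4 using 1
    show (1:ℝ) - 1 / (1 + (s / η) ^ 2) = _
    field_simp [hη.ne']
  have hρc : ContDiff ℝ 2 ρ := by
    have : ContDiff ℝ 2 (fun s : ℝ => η * Real.arctan (s / η)) :=
      contDiff_const.mul (Real.contDiff_arctan.comp (contDiff_id.div_const η))
    exact contDiff_id.sub this
  have hρ'0 : ρ' 0 = 0 := by simp [hρ'def]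
  have hρ0 : ρ 0 = 0 := by simp [hρdef]
  have hρ'nonneg : ∀ s, 0 ≤ ρ' s := by
    intro s
    have h1 : (1 : ℝ) / (1 + (s / η) ^ 2) ≤ 1 := by
      rw [div_le_one (by positivity)]; nlinarith [sq_nonneg (s / η)]
    simp only [hρ'def]; linarith
  have hρ'le1 : ∀ s, ρ' s ≤ 1 := by
    intro s
    have h1 : (0 : ℝ) < 1 / (1 + (s / η) ^ 2) := by positivity
    simp only [hρ'def]; linarith
  -- arctan is 1-Lipschitz, so |arctan t| ≤ |t|.
  have harctan_lip : ∀ t : ℝ, |Real.arctan t| ≤ |t| := by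
    intro t
    have := Convex.norm_image_sub_le_of_norm_deriv_le
      (f := Real.arctan) (C := 1) (s := (Set.univ : Set ℝ))
      (fun x _ => (Real.hasDerivAt_arctan x).differentiableAt)
      (fun x _ => by
        rw [(Real.hasDerivAt_arctan x).deriv]
        rw [Real.norm_eq_abs, abs_of_nonneg (by positivity)]
        rw [div_le_one (by positivity)]; nlinarith [sq_nonneg x])
      convex_univ (Set.mem_univ 0) (Set.mem_univ t)
    simpa [Real.arctan_zero] using this
  have harctan_nonneg : ∀ t : ℝ, 0 ≤ t → 0 ≤ Real.arctan t := by
    intro t ht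
    have := Real.arctan_strictMono.monotone ht
    simpa [Real.arctan_zero] using this
  -- ρ s ∈ [0, s] for s ≥ 0.
  have hρ_le : ∀ s, 0 ≤ s → ρ s ≤ s := by
    intro s hs
    have := harctan_nonneg (s / η) (by positivity)
    have : 0 ≤ η * Real.arctan (s / η) := by positivity
    simp only [hρdef]; linarith
  have hρ_nonneg : ∀ s, 0 ≤ s → 0 ≤ ρ s := by
    intro s hs
    have h1 : |Real.arctan (s / η)| ≤ |s / η| := harctan_lip _
    have h2 : Real.arctan (s / η) ≤ s / η := by
      calc Real.arctan (s / η) ≤ |Real.arctan (s / η)| := le_abs_self _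
        _ ≤ |s / η| := h1
        _ = s / η := abs_of_nonneg (by positivity)
    have h3 : η * Real.arctan (s / η) ≤ η * (s / η) := by
      exact mul_le_mul_of_nonneg_left h2 hη.le
    have h4 : η * (s / η) = s := by field_simp
    simp only [hρdef]; linarith
  -- s − ρ s ≤ 2η.
  have hρ_close : ∀ s, 0 ≤ s → s - ρ s ≤ 2 * η := by
    intro s hs
    have h1 : Real.arctan (s / η) < Real.pi / 2 := (Real.arctan_mem_Ioo _).2
    have h2 : Real.pi / 2 ≤ 2 := by linarith [Real.pi_le_four]
    have h3 : η * Real.arctan (s / η) ≤ η * 2 := by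
      apply mul_le_mul_of_nonneg_left (by linarith) hη.le
    simp only [hρdef]; linarith
  clear_value ρ ρ'
  -- Regularity and chain rule for the modified path.
  have hg : ContDiff ℝ 2 (fun s => f (ρ s)) := hf.comp hρc
  have cg' : Continuous (deriv fun s => f (ρ s)) := hg.continuous_deriv one_le_two
  have cρ' : Continuous ρ' := by
    rw [hρ'def]
    apply continuous_const.sub
    exact continuous_const.div (by continuity) (fun x => by positivity)
  have hchain : ∀ s, deriv (fun s => f (ρ s)) s = deriv f (ρ s) * ρ' s := by
    intro s
    have := deriv_comp (x := s) (hf.differentiable two_ne_zero (ρ s)) (hρd s).differentiableAt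
    rw [(hρd s).deriv] at this
    simpa [Function.comp_def] using this
  -- Key integral inequality: the energy only decreases.
  have key : ∀ φ : ℝ, 0 ≤ φ →
      (∫ s in (0:ℝ)..φ, (deriv (fun s => f (ρ s)) s) ^ 2) ≤
      ∫ s in (0:ℝ)..φ, (deriv f s) ^ 2 := by
    intro φ hφ
    have cint : Continuous (fun s => ρ' s * (deriv f (ρ s)) ^ 2) :=
      cρ'.mul ((cf'.comp hρc.continuous).pow 2)
    have step1 : (∫ s in (0:ℝ)..φ, (deriv (fun s => f (ρ s)) s) ^ 2) ≤
        ∫ s in (0:ℝ)..φ, ρ' s * (deriv f (ρ s)) ^ 2 := by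
      apply intervalIntegral.integral_mono_on hφ
        ((cg'.pow 2).intervalIntegrable _ _) (cint.intervalIntegrable _ _)
      intro x _
      rw [Pi.pow_apply, hchain x]
      have h2 : ρ' x * ρ' x ≤ ρ' x := by
        nlinarith [hρ'nonneg x, hρ'le1 x]
      calc (deriv f (ρ x) * ρ' x) ^ 2 = (deriv f (ρ x)) ^ 2 * (ρ' x * ρ' x) := by ring
        _ ≤ (deriv f (ρ x)) ^ 2 * ρ' x :=
          mul_le_mul_of_nonneg_left h2 (sq_nonneg _)
        _ = ρ' x * (deriv f (ρ x)) ^ 2 := by ring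
    have step2 : (∫ s in (0:ℝ)..φ, ρ' s * (deriv f (ρ s)) ^ 2) =
        ∫ u in (0:ℝ)..(ρ φ), (deriv f u) ^ 2 := by
      have := intervalIntegral.integral_comp_smul_deriv
        (a := (0:ℝ)) (b := φ) (f := ρ) (f' := ρ')
        (g := fun u => (deriv f u) ^ 2)
        (fun x _ => hρd x) cρ'.continuousOn (cf'.pow 2)
      simpa [hρ0, Function.comp, smul_eq_mul] using this
    have step3 : (∫ u in (0:ℝ)..(ρ φ), (deriv f u) ^ 2) ≤
        ∫ s in (0:ℝ)..φ, (deriv f s) ^ 2 := by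
      have hρφ0 : 0 ≤ ρ φ := hρ_nonneg φ hφ
      have hρφ : ρ φ ≤ φ := hρ_le φ hφ
      have hadd := intervalIntegral.integral_add_adjacent_intervals
        (f := fun u => (deriv f u) ^ 2) (μ := MeasureTheory.volume)
        (a := (0:ℝ)) (b := ρ φ) (c := φ)
        ((cf'.pow 2).intervalIntegrable _ _) ((cf'.pow 2).intervalIntegrable _ _)
      have hpos2 : 0 ≤ ∫ u in (ρ φ)..φ, (deriv f u) ^ 2 :=
        intervalIntegral.integral_nonneg hρφ (fun u _ => sq_nonneg _)
      linarith
    linarith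
  -- The modified path.
  refine ⟨fun s => f (ρ s), hg, by simp [hρ0, hf0], ?_, ?_, ?_, ?_⟩
  · -- flat initial derivative
    have := hchain 0
    rw [hρ'0, mul_zero] at this
    exact this
  · -- uniform closeness
    intro s hs
    have hb := Convex.norm_image_sub_le_of_norm_deriv_le
      (f := f) (C := C) (s := (Set.Icc (0:ℝ) θ))
      (fun x _ => hf.differentiable two_ne_zero _) hC (convex_Icc _ _)
      ⟨hρ_nonneg s hs.1, le_trans (hρ_le s hs.1) hs.2⟩ hs
    have h1 : |f s - f (ρ s)| ≤ C * |s - ρ s| := by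
      simpa [Real.norm_eq_abs] using hb
    have h2 : |s - ρ s| = s - ρ s := abs_of_nonneg (by linarith [hρ_le s hs.1])
    have h3 : C * (s - ρ s) ≤ C * (2 * η) :=
      mul_le_mul_of_nonneg_left (hρ_close s hs.1) hC0
    have h4 : C * (2 * η) ≤ ε / 2 := by
      nlinarith [mul_nonneg hη.le hC0, hη.le]
    calc |f s - f (ρ s)| ≤ C * (s - ρ s) := by rw [← h2]; exact h1
      _ ≤ C * (2 * η) := h3
      _ ≤ ε / 2 := h4
  · -- positivity of the growth functional
    intro φ hφ
    have h1 := key φ hφ.1.le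
    have h2 := hpos φ hφ
    linarith
  · -- terminal value
    have h1 := key θ hθ.1.le
    linarith

/-- The modification step at the end of the proof of Lemma 8: a `C²` path `f` with `f(0) = 0`
and strictly positive growth functional `J(f,φ) = rmφ − (1/2)∫₀^φ f'²` on `(0, θ]` can be
replaced by a nearby `C²` path `g` with `g(0) = 0`, flat initial derivative, uniformly
`ε/2`-close to `f` on `[0, θ]`, still with strictly positive growth functional on `(0, θ]`,
and with terminal value of the functional reduced by less than `δ/2`. -/
theorem flat_start_modification
    (r m θ : ℝ) (hr : 0 < r) (hm : 0 < m) (hθ : θ ∈ Set.Ioc (0 : ℝ) 1)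
    (f : ℝ → ℝ) (hf : ContDiff ℝ 2 f) (hf0 : f 0 = 0)
    (hpos : ∀ φ ∈ Set.Ioc (0 : ℝ) θ,
      0 < r * m * φ - (1 / 2) * (∫ s in (0 : ℝ)..φ, (deriv f s) ^ 2))
    (ε δ : ℝ) (hε : 0 < ε) (hδ : 0 < δ) :
    ∃ g : ℝ → ℝ, ContDiff ℝ 2 g ∧ g 0 = 0 ∧ deriv g 0 = 0 ∧
      (∀ s ∈ Set.Icc (0 : ℝ) θ, |f s - g s| ≤ ε / 2) ∧
      (∀ φ ∈ Set.Ioc (0 : ℝ) θ,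
        0 < r * m * φ - (1 / 2) * (∫ s in (0 : ℝ)..φ, (deriv g s) ^ 2)) ∧
      r * m * θ - (1 / 2) * (∫ s in (0 : ℝ)..θ, (deriv g s) ^ 2) >
        r * m * θ - (1 / 2) * (∫ s in (0 : ℝ)..θ, (deriv f s) ^ 2) - δ / 2 :=
  flat_start_modification_aux r m θ hr hm hθ f hf hf0 hpos ε δ hε hδ
end

section
/- There exists a natural number N₀ such that for all natural numbers N ≥ N₀ and all real j ≥ 1: ∑_{n=N}^{∞} (8·√(n³(j+1)) / (j·√π))·exp(−j²n / (16(j+1))) ≤ exp(−jN/64). -/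
open Real Filter Topology

private noncomputable def lem13f (n : ℕ) : ℝ := 8 * (n : ℝ) ^ 2 * Real.exp (-(1 : ℝ) / 64) ^ n

private lemma lem13f_summable : Summable lem13f := by
  have h : Summable (fun n : ℕ => (n : ℝ) ^ 2 * Real.exp (-(1 : ℝ) / 64) ^ n) := by
    apply summable_pow_mul_geometric_of_norm_lt_one
    rw [Real.norm_eq_abs, abs_of_pos (Real.exp_pos _)]
    exact Real.exp_lt_one_iff.mpr (by norm_num)
  unfold lem13f
  simpa [mul_assoc] using h.mul_left 8

private lemma lem13f_nonneg (n : ℕ) : 0 ≤ lem13f n := by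
  unfold lem13f
  positivity

private def lem13shift (N : ℕ) : ℕ ≃ {k : ℕ // N ≤ k} where
  toFun k := ⟨k + N, Nat.le_add_left _ _⟩
  invFun x := x.1 - N
  left_inv k := by simp
  right_inv x := by
    ext
    exact Nat.sub_add_cancel x.2

/-- The summation estimate in the proof of Lemma 13 (with `S = j`, `T = j + 1`): for `N`
large, uniformly in `j ≥ 1`,
`∑_{n ≥ N} (8 √(n³(j+1)) / (j √π)) exp(−j²n/(16(j+1))) ≤ exp(−jN/64)`. -/
theorem lemma13_summation_estimate :
    ∃ N₀ : ℕ, ∀ N : ℕ, N₀ ≤ N → ∀ j : ℝ, 1 ≤ j →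
      (∑' n : {k : ℕ // N ≤ k},
          8 * Real.sqrt (((n : ℕ) : ℝ) ^ 3 * (j + 1)) / (j * Real.sqrt Real.pi) *
            Real.exp (-(j ^ 2 * ((n : ℕ) : ℝ)) / (16 * (j + 1)))) ≤
        Real.exp (-(j * N) / 64) := by
  -- choose N₀ so that the tail of the majorant series is ≤ 1
  have htail : Tendsto (fun i => ∑' k : ℕ, lem13f (k + i)) atTop (𝓝 0) :=
    tendsto_sum_nat_add lem13f
  have hev : ∀ᶠ i in atTop, (∑' k : ℕ, lem13f (k + i)) ≤ 1 := by
    filter_upwards [htail.eventually (eventually_le_nhds (by norm_num : (0 : ℝ) < 1))] with i hi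
    exact hi
  obtain ⟨N₀, hN₀⟩ := eventually_atTop.1 hev
  refine ⟨max N₀ 1, fun N hN j hj => ?_⟩
  have hNN₀ : N₀ ≤ N := le_trans (le_max_left _ _) hN
  have hN1 : 1 ≤ N := le_trans (le_max_right _ _) hN
  have hj0 : (0 : ℝ) < j := lt_of_lt_of_le one_pos hj
  set C : ℝ := Real.exp (-(j * N) / 64) with hC
  have hC0 : 0 ≤ C := (Real.exp_pos _).le
  -- per-term bound
  have hterm : ∀ n : {k : ℕ // N ≤ k},
      8 * Real.sqrt (((n : ℕ) : ℝ) ^ 3 * (j + 1)) / (j * Real.sqrt Real.pi) *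
        Real.exp (-(j ^ 2 * ((n : ℕ) : ℝ)) / (16 * (j + 1))) ≤ lem13f (n : ℕ) * C := by
    rintro ⟨n, hn⟩
    simp only
    set x : ℝ := (n : ℝ) with hxdef
    have hxN : (N : ℝ) ≤ x := Nat.cast_le.mpr hn
    have hx1 : (1 : ℝ) ≤ x := le_trans (by exact_mod_cast hN1) hxN
    have hx0 : (0 : ℝ) ≤ x := le_trans zero_le_one hx1
    -- prefactor bound : 8 √(x³(j+1)) / (j √π) ≤ 8 x²
    have hpre : 8 * Real.sqrt (x ^ 3 * (j + 1)) / (j * Real.sqrt Real.pi) ≤ 8 * x ^ 2 := by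
      have h1 : Real.sqrt (x ^ 3 * (j + 1)) ≤ Real.sqrt ((x ^ 2) ^ 2 * (Real.pi * j ^ 2)) := by
        apply Real.sqrt_le_sqrt
        have hpi : (2 : ℝ) ≤ Real.pi := two_le_pi
        have hj2 : j + 1 ≤ Real.pi * j ^ 2 := by
          nlinarith [mul_nonneg hj0.le (sub_nonneg.2 hj)]
        have hx34 : x ^ 3 ≤ (x ^ 2) ^ 2 := by
          nlinarith [mul_nonneg (mul_nonneg (mul_nonneg hx0 hx0) hx0) (sub_nonneg.2 hx1)]
        calc x ^ 3 * (j + 1) ≤ x ^ 3 * (Real.pi * j ^ 2) :=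
              mul_le_mul_of_nonneg_left hj2 (by positivity)
          _ ≤ (x ^ 2) ^ 2 * (Real.pi * j ^ 2) :=
              mul_le_mul_of_nonneg_right hx34 (by positivity)
      have h2 : Real.sqrt ((x ^ 2) ^ 2 * (Real.pi * j ^ 2)) = x ^ 2 * (Real.sqrt Real.pi * j) := by
        rw [Real.sqrt_mul (by positivity), Real.sqrt_mul (by positivity),
          Real.sqrt_sq (by positivity), Real.sqrt_sq hj0.le]
      have hden : 0 < j * Real.sqrt Real.pi := by positivity
      rw [div_le_iff₀ hden]
      calc 8 * Real.sqrt (x ^ 3 * (j + 1)) ≤ 8 * (x ^ 2 * (Real.sqrt Real.pi * j)) := by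
            rw [← h2]; exact mul_le_mul_of_nonneg_left h1 (by norm_num)
        _ = 8 * x ^ 2 * (j * Real.sqrt Real.pi) := by ring
    -- exponential bound
    have hexp : Real.exp (-(j ^ 2 * x) / (16 * (j + 1))) ≤
        Real.exp (-x / 64) * C := by
      rw [hC, ← Real.exp_add]
      apply Real.exp_le_exp.mpr
      rw [div_le_iff₀ (by positivity : (0 : ℝ) < 16 * (j + 1)), neg_div, neg_div]
      nlinarith [mul_nonneg (sub_nonneg.2 hj) hx0, mul_nonneg (sub_nonneg.2 hj)
        (le_trans (Nat.cast_nonneg N) hxN), mul_nonneg (mul_nonneg (sub_nonneg.2 hj)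
        (sub_nonneg.2 hj)) hx0, mul_nonneg (sub_nonneg.2 hxN) (mul_nonneg hj0.le hj0.le),
        mul_nonneg (sub_nonneg.2 hxN) hj0.le]
    have hfo : lem13f n = 8 * x ^ 2 * Real.exp (-x / 64) := by
      unfold lem13f
      rw [← Real.exp_nat_mul]
      norm_num
      rw [hxdef]
      ring_nf
    rw [hfo]
    calc 8 * Real.sqrt (x ^ 3 * (j + 1)) / (j * Real.sqrt Real.pi) *
          Real.exp (-(j ^ 2 * x) / (16 * (j + 1)))
        ≤ 8 * x ^ 2 * (Real.exp (-x / 64) * C) := by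
          apply mul_le_mul hpre hexp (Real.exp_pos _).le (by positivity)
      _ = 8 * x ^ 2 * Real.exp (-x / 64) * C := by ring
  -- summability of the majorant over the subtype
  have hsum2 : Summable (fun n : {k : ℕ // N ≤ k} => lem13f (n : ℕ) * C) :=
    (lem13f_summable.subtype _).mul_right C
  have hnonneg : ∀ n : {k : ℕ // N ≤ k},
      0 ≤ 8 * Real.sqrt (((n : ℕ) : ℝ) ^ 3 * (j + 1)) / (j * Real.sqrt Real.pi) *
        Real.exp (-(j ^ 2 * ((n : ℕ) : ℝ)) / (16 * (j + 1))) := fun n => by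
    apply mul_nonneg (div_nonneg (by positivity) (by positivity)) (Real.exp_pos _).le
  have hsum1 : Summable (fun n : {k : ℕ // N ≤ k} =>
      8 * Real.sqrt (((n : ℕ) : ℝ) ^ 3 * (j + 1)) / (j * Real.sqrt Real.pi) *
        Real.exp (-(j ^ 2 * ((n : ℕ) : ℝ)) / (16 * (j + 1)))) :=
    Summable.of_nonneg_of_le hnonneg hterm hsum2
  calc (∑' n : {k : ℕ // N ≤ k},
        8 * Real.sqrt (((n : ℕ) : ℝ) ^ 3 * (j + 1)) / (j * Real.sqrt Real.pi) *
          Real.exp (-(j ^ 2 * ((n : ℕ) : ℝ)) / (16 * (j + 1))))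
      ≤ ∑' n : {k : ℕ // N ≤ k}, lem13f (n : ℕ) * C := Summable.tsum_le_tsum hterm hsum1 hsum2
    _ = (∑' n : {k : ℕ // N ≤ k}, lem13f (n : ℕ)) * C := tsum_mul_right
    _ ≤ 1 * C := by
        apply mul_le_mul_of_nonneg_right _ hC0
        have heq : (∑' n : {k : ℕ // N ≤ k}, lem13f (n : ℕ)) = ∑' k : ℕ, lem13f (k + N) :=
          ((lem13shift N).tsum_eq (fun n : {k : ℕ // N ≤ k} => lem13f (n : ℕ))).symm
        rw [heq]
        exact hN₀ N hNN₀
    _ = C := one_mul C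
end
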